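/- A finite-dimensional commutative Frobenius algebra (𝒜, F) over an algebraically closed field of characteristic 0 is semi-simple (isomorphic to a finite product of copies of the field) if and only if its Euler class ℰ(𝒜,F) is invertible in 𝒜. -/

import Mathlib

section aux

variable {k 𝒜 : Type*} [Field k] [CommRing 𝒜] [Algebra k 𝒜] [FiniteDimensional k 𝒜]

omit [FiniteDimensional k 𝒜] in
/-- trace of multiplication in terms of the Frobenius form and Euler class -/
lemma trace_eq_F_mul_euler (F : 𝒜 →ₗ[k] k)
    {ι : Type*} [Fintype ι] [DecidableEq ι]
    (b : Module.Basis ι k 𝒜) (bd : ι → 𝒜)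
    (hbd : ∀ i j, F (b i * bd j) = if i = j then 1 else 0) (x : 𝒜) :
    Algebra.trace k 𝒜 x = F (x * ∑ i, b i * bd i) := by
  have hrepr : ∀ (a : 𝒜) (j : ι), F (a * bd j) = b.repr a j := by
    intro a j
    conv_lhs => rw [← b.sum_repr a]
    rw [Finset.sum_mul, map_sum]
    simp only [smul_mul_assoc, map_smul, hbd, smul_eq_mul, mul_ite, mul_one, mul_zero]
    simp
  rw [Algebra.trace_eq_matrix_trace b, Matrix.trace, Finset.mul_sum, map_sum]
  apply Finset.sum_congr rfl
  intro i _
  rw [Matrix.diag_apply, Algebra.leftMulMatrix_eq_repr_mul, ← hrepr, ← mul_assoc]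

lemma trace_pi (m : ℕ) (z : Fin m → k) :
    Algebra.trace k (Fin m → k) z = ∑ j, z j := by
  rw [Algebra.trace_eq_matrix_trace (Pi.basisFun k (Fin m)), Matrix.trace]
  apply Finset.sum_congr rfl
  intro i _
  rw [Matrix.diag_apply, Algebra.leftMulMatrix_eq_repr_mul]
  simp [Pi.basisFun_apply, Pi.single_apply]

end aux

/-- A finite-dimensional commutative Frobenius algebra over an algebraically
closed field of characteristic 0 is semi-simple (a finite product of copies of
the field) if and only if its Euler class `Σᵢ aᵢ aᵢ⸌` is invertible. -/
theorem stmt_14 {k 𝒜 : Type*} [Field k] [IsAlgClosed k] [CharZero k]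
    [CommRing 𝒜] [Algebra k 𝒜] [FiniteDimensional k 𝒜]
    (F : 𝒜 →ₗ[k] k)
    (hF : ∀ x : 𝒜, (∀ y : 𝒜, F (x * y) = 0) → x = 0)
    {ι : Type*} [Fintype ι] [DecidableEq ι]
    (b : Module.Basis ι k 𝒜) (bd : ι → 𝒜)
    (hbd : ∀ i j, F (b i * bd j) = if i = j then 1 else 0) :
    (∃ m : ℕ, Nonempty (𝒜 ≃ₐ[k] (Fin m → k))) ↔ IsUnit (∑ i, b i * bd i) := by
  set E : 𝒜 := ∑ i, b i * bd i with hE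
  have trE : ∀ x : 𝒜, Algebra.trace k 𝒜 x = F (x * E) :=
    trace_eq_F_mul_euler F b bd hbd
  constructor
  · rintro ⟨m, ⟨e⟩⟩
    -- multiplication by E is injective
    have hinj : ∀ x : 𝒜, E * x = 0 → x = 0 := by
      intro x hx
      have htr : ∀ y : 𝒜, Algebra.trace k 𝒜 (x * y) = 0 := by
        intro y
        rw [trE]
        have : x * y * E = y * (E * x) := by ring
        rw [this, hx, mul_zero, map_zero]
      have hex : ∀ j : Fin m, e x j = 0 := by
        intro j
        have h2 : Algebra.trace k (Fin m → k) (e (x * e.symm (Pi.single j 1))) =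
            Algebra.trace k 𝒜 (x * e.symm (Pi.single j 1)) :=
          Algebra.trace_eq_of_algEquiv e _
        rw [htr _, map_mul, e.apply_symm_apply, trace_pi] at h2
        simpa [Pi.single_apply] using h2
      apply e.injective
      rw [map_zero]
      exact funext hex
    -- hence multiplication by E is bijective, so E is a unit
    have hinj' : Function.Injective (LinearMap.mulLeft k E) := by
      intro y₁ y₂ h
      simp only [LinearMap.mulLeft_apply] at h
      have h0 : E * (y₁ - y₂) = 0 := by rw [mul_sub, h, sub_self]
      exact sub_eq_zero.mp (hinj _ h0)
    have hsurj : Function.Surjective (LinearMap.mulLeft k E) :=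
      LinearMap.surjective_of_injective hinj'
    obtain ⟨y, hy⟩ := hsurj 1
    exact IsUnit.of_mul_eq_one y hy
  · intro hu
    obtain ⟨v, hv⟩ := hu.exists_right_inv
    -- the trace form is nondegenerate
    have hnd : ∀ x : 𝒜, (∀ y : 𝒜, Algebra.trace k 𝒜 (x * y) = 0) → x = 0 := by
      intro x hx
      apply hF
      intro z
      have := hx (z * v)
      rw [trE] at this
      have heq : x * (z * v) * E = x * z * (E * v) := by ring
      rw [heq, hv, mul_one] at this
      exact this
    -- 𝒜 is reduced
    haveI : IsReduced 𝒜 := by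
      constructor
      intro x hx
      apply hnd
      intro y
      obtain ⟨n, hn⟩ := hx
      have hnil : IsNilpotent ((Algebra.lmul k 𝒜) (x * y)) :=
        ⟨n, by rw [← map_pow, mul_pow, hn, zero_mul, map_zero]⟩
      have := LinearMap.isNilpotent_trace_of_isNilpotent hnil
      rw [Algebra.trace_apply] at *
      exact this.eq_zero
    -- 𝒜 is artinian
    haveI : IsArtinianRing 𝒜 := isArtinian_of_tower k inferInstance
    haveI hfin : Finite {I : Ideal 𝒜 | I.IsMaximal} :=
      (IsArtinianRing.setOfPred_isMaximal_finite 𝒜).to_subtype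
    haveI : Fintype {I : Ideal 𝒜 | I.IsMaximal} := Fintype.ofFinite _
    set S := {I : Ideal 𝒜 | I.IsMaximal}
    -- the CRT map as an algebra hom, bijective since it agrees with equivPi
    let φ : 𝒜 →ₐ[k] ∀ I : S, 𝒜 ⧸ I.1 :=
      Pi.algHom k _ (fun I : S => Ideal.Quotient.mkₐ k I.1)
    have hφ : Function.Bijective φ := by
      refine ⟨fun x y h => ?_, fun f => ?_⟩
      · apply (IsArtinianRing.equivPi 𝒜).injective
        funext m
        exact congrFun h ⟨m.asIdeal, m.isMaximal⟩
      · obtain ⟨x, hx⟩ := (IsArtinianRing.equivPi 𝒜).surjective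
          (fun m => f ⟨m.asIdeal, m.isMaximal⟩)
        refine ⟨x, funext fun I => ?_⟩
        exact congrFun hx ⟨I.1, I.2⟩
    -- each quotient is isomorphic to k
    have eI : ∀ I : S, k ≃ₐ[k] 𝒜 ⧸ I.1 := by
      intro I
      haveI : I.1.IsMaximal := I.2
      haveI : IsDomain (𝒜 ⧸ I.1) := Ideal.Quotient.isDomain I.1
      haveI : Module.Finite k (𝒜 ⧸ I.1) :=
        Module.Finite.of_surjective (Ideal.Quotient.mkₐ k I.1).toLinearMap
          (Ideal.Quotient.mk_surjective)
      refine AlgEquiv.ofBijective (Algebra.ofId k (𝒜 ⧸ I.1)) ⟨?_, ?_⟩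
      · exact fun a b hab => (algebraMap k (𝒜 ⧸ I.1)).injective hab
      · exact IsAlgClosed.algebraMap_bijective_of_isIntegral.2
    -- reindex
    let σ : Fin (Fintype.card S) ≃ S := (Fintype.equivFin S).symm
    let ψ : (∀ _ : S, k) ≃ₐ[k] (Fin (Fintype.card S) → k) :=
      { Equiv.piCongrLeft' (fun _ => k) (Fintype.equivFin S) with
        map_mul' := fun _ _ => rfl
        map_add' := fun _ _ => rfl
        commutes' := fun _ => rfl }
    exact ⟨Fintype.card S,
      ⟨((AlgEquiv.ofBijective φ hφ).trans
          (AlgEquiv.piCongrRight eI).symm).trans ψ⟩⟩
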